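/- Let X be R-subgaussian in a real separable Hilbert space 𝒳 with R positive self-adjoint trace class. Then for all ε > 2√tr(R), P[‖X‖ > ε] ≤ exp(−ε² / (8‖R‖)). -/

import Mathlib

open MeasureTheory RealInnerProductSpace

section Helpers
open Real

lemma gauss_int_lin (a : ℝ) : ∫ z : ℝ, exp (a * z - z^2/2) = Real.sqrt (2*π) * exp (a^2/2) := by
  have h : ∀ z : ℝ, a * z - z^2/2 = a^2/2 + -((1:ℝ)/2) * (z - a)^2 := by intro z; ring
  simp_rw [h, Real.exp_add]
  rw [MeasureTheory.integral_const_mul]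
  rw [integral_sub_right_eq_self (μ := volume) (fun z => exp (-((1:ℝ)/2) * z^2)) a]
  rw [integral_gaussian]
  rw [mul_comm, Real.sqrt_mul (by norm_num : (0:ℝ) ≤ 2)]
  norm_num
  ring

lemma gauss_int_lin_integrable (a : ℝ) : Integrable (fun z : ℝ => exp (a * z - z^2/2)) := by
  have h : ∀ z : ℝ, a * z - z^2/2 = a^2/2 + -((1:ℝ)/2) * (z - a)^2 := by intro z; ring
  simp_rw [h, Real.exp_add]
  exact (Integrable.comp_sub_right (integrable_exp_neg_mul_sq (by norm_num : (0:ℝ) < 1/2)) a).const_mul _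

lemma gauss_int_sq_integrable {c : ℝ} (hc : c < 1/2) :
    Integrable (fun z : ℝ => exp (c * z^2 - z^2/2)) := by
  have h : ∀ z : ℝ, c * z^2 - z^2/2 = -(1/2 - c) * z^2 := by intro z; ring
  simp_rw [h]
  exact integrable_exp_neg_mul_sq (by linarith)

lemma exp_neg_le (c : ℝ) (h0 : 0 ≤ c) (h1 : c ≤ 1/4) : exp (-(4*c)) ≤ 1 - 2*c := by
  have h2 : 1 + 4*c ≤ exp (4*c) := by have := Real.add_one_le_exp (4*c); linarith
  have h3 : exp (-(4*c)) = (exp (4*c))⁻¹ := by rw [Real.exp_neg]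
  rw [h3]
  have hc2 : (0:ℝ) < 1 - 2*c := by linarith
  rw [inv_le_comm₀ (Real.exp_pos _) hc2]
  have : (1 - 2*c)⁻¹ ≤ 1 + 4*c := by
    rw [inv_le_iff_one_le_mul₀' hc2]
    nlinarith
  linarith

lemma gauss_int_sq_le {c : ℝ} (h0 : 0 ≤ c) (h1 : c ≤ 1/4) :
    ∫ z : ℝ, exp (c * z^2 - z^2/2) ≤ Real.sqrt (2*π) * exp (2*c) := by
  have h : ∀ z : ℝ, c * z^2 - z^2/2 = -(1/2 - c) * z^2 := by intro z; ring
  simp_rw [h]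
  rw [integral_gaussian]
  have hpos : (0:ℝ) < 1/2 - c := by linarith
  have key : exp (-(4*c)) ≤ 1 - 2*c := exp_neg_le c h0 h1
  have h2 : π / (1/2 - c) ≤ 2*π * exp (4*c) := by
    rw [div_le_iff₀ hpos]
    have hexp : (0:ℝ) < exp (-(4*c)) := Real.exp_pos _
    have : (1:ℝ) ≤ exp (4*c) * (1 - 2*c) := by
      have := mul_le_mul_of_nonneg_left key (le_of_lt (Real.exp_pos (4*c)))
      rw [← Real.exp_add] at this
      simp at this
      linarith
    nlinarith [Real.pi_pos, Real.exp_pos (4*c)]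
  calc Real.sqrt (π / (1/2-c)) ≤ Real.sqrt (2*π * exp (4*c)) := Real.sqrt_le_sqrt h2
    _ = Real.sqrt (2*π) * exp (2*c) := by
        rw [Real.sqrt_mul (by positivity)]
        congr 1
        rw [show (4:ℝ)*c = 2*c + 2*c by ring, Real.exp_add]
        rw [show rexp (2*c) * rexp (2*c) = rexp (2*c) ^ 2 by ring]
        exact Real.sqrt_sq (le_of_lt (Real.exp_pos _))

lemma core_tail {Ω : Type*} [MeasurableSpace Ω] {μ : Measure Ω} [IsProbabilityMeasure μ]
    {n : ℕ} (Y : Fin n → Ω → ℝ) (hY : ∀ k, AEMeasurable (Y k) μ)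
    (μs : Fin n → ℝ) {B t : ℝ} (hB : 0 < B)
    (hμ0 : ∀ k, 0 ≤ μs k) (hμB : ∀ k, μs k ≤ B) (hμt : ∑ k, μs k ≤ t)
    (hintg : ∀ l : Fin n → ℝ, Integrable (fun ω => exp (∑ k, l k * Y k ω)) μ)
    (hmgf : ∀ l : Fin n → ℝ, ∫ ω, exp (∑ k, l k * Y k ω) ∂μ ≤ exp (∑ k, μs k * l k ^ 2 / 2))
    {ε : ℝ} (hε : 0 < ε) (hεt : t ≤ ε ^ 2 / 4) :
    μ {ω | ε ^ 2 < ∑ k, Y k ω ^ 2} ≤ ENNReal.ofReal (exp (-(ε^2) / (8 * B))) := by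
  have ht0 : 0 ≤ t := le_trans (Finset.sum_nonneg fun k _ => hμ0 k) hμt
  set θ : ℝ := (4*B)⁻¹ with hθdef
  have hθ : 0 < θ := by positivity
  set c : ℝ := Real.sqrt (2*θ) with hcdef
  have hc2 : c^2 = 2*θ := Real.sq_sqrt (by positivity)
  have hθμ : ∀ k, 0 ≤ θ * μs k ∧ θ * μs k ≤ 1/4 := by
    intro k
    constructor
    · exact mul_nonneg hθ.le (hμ0 k)
    · have : θ * μs k ≤ θ * B := mul_le_mul_of_nonneg_left (hμB k) hθ.le
      rw [hθdef] at this ⊢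
      calc (4*B)⁻¹ * μs k ≤ (4*B)⁻¹ * B := this
        _ = 1/4 := by field_simp
  -- the key MGF bound
  have key : ∫⁻ ω, ENNReal.ofReal (exp (θ * ∑ k, Y k ω ^ 2)) ∂μ
      ≤ ENNReal.ofReal (exp (2*θ*t)) := by
    have sqrt2pi_pos : (0:ℝ) < Real.sqrt (2*π) := Real.sqrt_pos.mpr (by positivity)
    set C : ℝ := (Real.sqrt (2*π))^n with hCdef
    have hC : 0 < C := pow_pos sqrt2pi_pos n
    -- step A : pointwise identity
    have stepA : ∀ ω, ENNReal.ofReal (exp (θ * ∑ k, Y k ω ^ 2))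
        = ENNReal.ofReal C⁻¹ *
          ∫⁻ z : Fin n → ℝ, ENNReal.ofReal (∏ k, exp (c * z k * Y k ω - (z k)^2/2)) := by
      intro ω
      have hInt : Integrable (fun z : Fin n → ℝ => ∏ k, exp (c * z k * Y k ω - (z k)^2/2)) := by
        apply Integrable.fintype_prod (f := fun k z => exp (c * z * Y k ω - z^2/2))
        intro k
        have := gauss_int_lin_integrable (c * Y k ω)
        simpa [mul_comm, mul_assoc, mul_left_comm] using this
      rw [← ofReal_integral_eq_lintegral_ofReal hInt
        (Filter.Eventually.of_forall fun z => Finset.prod_nonneg fun k _ => (Real.exp_pos _).le)]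
      have hprod : (∫ z : Fin n → ℝ, ∏ k, exp (c * z k * Y k ω - (z k)^2/2))
          = C * exp (θ * ∑ k, Y k ω ^ 2) := by
        rw [integral_fintype_prod_volume_eq_prod (ι := Fin n) (fun k z => exp (c * z * Y k ω - z^2/2))]
        have : ∀ k, (∫ z : ℝ, exp (c * z * Y k ω - z^2/2))
            = Real.sqrt (2*π) * exp (θ * Y k ω ^ 2) := by
          intro k
          have h1 : ∀ z : ℝ, c * z * Y k ω = (c * Y k ω) * z := fun z => by ring
          simp_rw [h1]
          rw [gauss_int_lin]
          congr 2
          rw [mul_pow]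
          rw [hc2]
          ring
        simp_rw [this]
        rw [Finset.prod_mul_distrib, Finset.prod_const, ← Real.exp_sum, Finset.card_univ,
          Fintype.card_fin]
        rw [Finset.mul_sum]
      rw [hprod, ← ENNReal.ofReal_mul (by positivity)]
      congr 1
      field_simp
    simp_rw [stepA]
    rw [lintegral_const_mul' _ _ ENNReal.ofReal_ne_top]
    -- measurability on the product space
    have hprodmeas : AEMeasurable (Function.uncurry fun (ω : Ω) (z : Fin n → ℝ) =>
        ENNReal.ofReal (∏ k, exp (c * z k * Y k ω - (z k)^2/2)))
        (μ.prod (volume : Measure (Fin n → ℝ))) := by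
      apply AEMeasurable.ennreal_ofReal
      apply Finset.aemeasurable_fun_prod
      intro k _
      apply Real.measurable_exp.comp_aemeasurable
      apply AEMeasurable.sub
      · exact (measurable_const.mul ((measurable_pi_apply k).comp measurable_snd)).aemeasurable.mul
          ((hY k).comp_quasiMeasurePreserving MeasureTheory.Measure.quasiMeasurePreserving_fst)
      · exact ((((measurable_pi_apply k).comp measurable_snd).pow measurable_const).div
          measurable_const).aemeasurable
    rw [lintegral_lintegral_swap hprodmeas]
    -- inner bound for each z
    have inner_bd : ∀ z : Fin n → ℝ,
        ∫⁻ ω, ENNReal.ofReal (∏ k, exp (c * z k * Y k ω - (z k)^2/2)) ∂μ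
          ≤ ENNReal.ofReal (∏ k, exp (θ * μs k * (z k)^2 - (z k)^2/2)) := by
      intro z
      have hsplit : ∀ ω, (∏ k, exp (c * z k * Y k ω - (z k)^2/2))
          = exp (∑ k, -(z k)^2/2) * exp (∑ k, (c * z k) * Y k ω) := by
        intro ω
        rw [← Real.exp_sum, ← Real.exp_add, ← Finset.sum_add_distrib]
        congr 1
        apply Finset.sum_congr rfl
        intro k _
        ring
      simp_rw [hsplit]
      simp_rw [ENNReal.ofReal_mul (le_of_lt (Real.exp_pos _))]
      rw [lintegral_const_mul' _ _ ENNReal.ofReal_ne_top]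
      have h1 : ∫⁻ ω, ENNReal.ofReal (exp (∑ k, (c * z k) * Y k ω)) ∂μ
          ≤ ENNReal.ofReal (exp (∑ k, μs k * (c * z k)^2/2)) := by
        rw [← ofReal_integral_eq_lintegral_ofReal (hintg (fun k => c * z k))
          (Filter.Eventually.of_forall fun ω => (Real.exp_pos _).le)]
        exact ENNReal.ofReal_le_ofReal (hmgf (fun k => c * z k))
      calc ENNReal.ofReal (exp (∑ k, -(z k)^2/2)) *
            ∫⁻ ω, ENNReal.ofReal (exp (∑ k, (c * z k) * Y k ω)) ∂μ
          ≤ ENNReal.ofReal (exp (∑ k, -(z k)^2/2)) *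
            ENNReal.ofReal (exp (∑ k, μs k * (c * z k)^2/2)) :=
            mul_le_mul_right h1 _
        _ = ENNReal.ofReal (∏ k, exp (θ * μs k * (z k)^2 - (z k)^2/2)) := by
            rw [← ENNReal.ofReal_mul (le_of_lt (Real.exp_pos _)), ← Real.exp_add,
              ← Finset.sum_add_distrib, ← Real.exp_sum]
            congr 1
            congr 1
            apply Finset.sum_congr rfl
            intro k _
            rw [mul_pow, hc2]
            ring
    calc ENNReal.ofReal C⁻¹ * ∫⁻ z : Fin n → ℝ, ∫⁻ ω,
            ENNReal.ofReal (∏ k, exp (c * z k * Y k ω - (z k)^2/2)) ∂μ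
        ≤ ENNReal.ofReal C⁻¹ * ∫⁻ z : Fin n → ℝ,
            ENNReal.ofReal (∏ k, exp (θ * μs k * (z k)^2 - (z k)^2/2)) := by
          exact mul_le_mul_right (lintegral_mono inner_bd) _
      _ ≤ ENNReal.ofReal C⁻¹ * ENNReal.ofReal (C * exp (2*θ*t)) := by
          gcongr
          have hIntg : Integrable (fun z : Fin n → ℝ =>
              ∏ k, exp (θ * μs k * (z k)^2 - (z k)^2/2)) := by
            apply Integrable.fintype_prod (f := fun k z => exp (θ * μs k * z^2 - z^2/2))
            intro k
            exact gauss_int_sq_integrable (lt_of_le_of_lt (hθμ k).2 (by norm_num))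
          rw [← ofReal_integral_eq_lintegral_ofReal hIntg
            (Filter.Eventually.of_forall fun z => Finset.prod_nonneg fun k _ => (Real.exp_pos _).le)]
          apply ENNReal.ofReal_le_ofReal
          rw [integral_fintype_prod_volume_eq_prod (ι := Fin n) (fun k z => exp (θ * μs k * z^2 - z^2/2))]
          calc ∏ k, ∫ z : ℝ, exp (θ * μs k * z^2 - z^2/2)
              ≤ ∏ k, (Real.sqrt (2*π) * exp (2*(θ * μs k))) := by
                apply Finset.prod_le_prod
                · intro k _
                  exact integral_nonneg fun z => (Real.exp_pos _).le
                · intro k _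
                  exact gauss_int_sq_le (hθμ k).1 (hθμ k).2
            _ = C * exp (∑ k, 2*(θ * μs k)) := by
                rw [Finset.prod_mul_distrib, Finset.prod_const, ← Real.exp_sum, Finset.card_univ,
                  Fintype.card_fin]
            _ ≤ C * exp (2*θ*t) := by
                apply mul_le_mul_of_nonneg_left _ hC.le
                apply Real.exp_le_exp.mpr
                have : ∑ k, 2*(θ * μs k) = 2*θ * ∑ k, μs k := by
                  rw [Finset.mul_sum]
                  apply Finset.sum_congr rfl
                  intro k _
                  ring
                rw [this]
                exact mul_le_mul_of_nonneg_left hμt (by positivity)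
      _ = ENNReal.ofReal (exp (2*θ*t)) := by
          rw [← ENNReal.ofReal_mul (by positivity)]
          congr 1
          field_simp
  -- Chernoff
  have hSmeas : AEMeasurable (fun ω => ENNReal.ofReal (exp (θ * ∑ k, Y k ω ^ 2))) μ := by
    apply AEMeasurable.ennreal_ofReal
    apply Real.measurable_exp.comp_aemeasurable
    apply AEMeasurable.const_mul
    apply Finset.aemeasurable_fun_sum _ fun k _ => ?_
    have : (fun ω => Y k ω ^ 2) = fun ω => Y k ω * Y k ω := by
      funext ω; ring
    rw [this]
    exact (hY k).mul (hY k)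
  set r := ENNReal.ofReal (exp (θ * ε^2)) with hrdef
  have hr0 : r ≠ 0 := ne_of_gt (ENNReal.ofReal_pos.mpr (Real.exp_pos _))
  have hrt : r ≠ ⊤ := ENNReal.ofReal_ne_top
  have hmono : {ω | ε^2 < ∑ k, Y k ω ^ 2}
      ⊆ {ω | r ≤ ENNReal.ofReal (exp (θ * ∑ k, Y k ω ^ 2))} := by
    intro ω hω
    exact ENNReal.ofReal_le_ofReal (Real.exp_le_exp.mpr
      (mul_le_mul_of_nonneg_left (le_of_lt hω) hθ.le))
  have harith : 2*θ*t - θ*ε^2 ≤ -(ε^2) / (8*B) := by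
    have h8 : ε^2/(8*B) = θ*ε^2/2 := by rw [hθdef]; field_simp; ring
    have h1 : 2*θ*t ≤ 2*θ*(ε^2/4) := by
      apply mul_le_mul_of_nonneg_left hεt (by positivity)
    have h2 : -(ε^2)/(8*B) = -(ε^2/(8*B)) := by ring
    rw [h2, h8]
    linarith
  calc μ {ω | ε^2 < ∑ k, Y k ω ^ 2}
      ≤ μ {ω | r ≤ ENNReal.ofReal (exp (θ * ∑ k, Y k ω ^ 2))} := measure_mono hmono
    _ ≤ (∫⁻ ω, ENNReal.ofReal (exp (θ * ∑ k, Y k ω ^ 2)) ∂μ) / r := by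
        rw [ENNReal.le_div_iff_mul_le (Or.inl hr0) (Or.inl hrt), mul_comm]
        exact mul_meas_ge_le_lintegral₀ hSmeas r
    _ ≤ ENNReal.ofReal (exp (2*θ*t)) / r := by gcongr
    _ = ENNReal.ofReal (exp (2*θ*t - θ*ε^2)) := by
        rw [hrdef, ← ENNReal.ofReal_div_of_pos (Real.exp_pos _), ← Real.exp_sub]
    _ ≤ ENNReal.ofReal (exp (-(ε^2) / (8*B))) :=
        ENNReal.ofReal_le_ofReal (Real.exp_le_exp.mpr harith)

-- trace is independent of the orthonormal basis, for symmetric maps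
lemma trace_onb_indep {V : Type*} [NormedAddCommGroup V] [InnerProductSpace ℝ V]
    {α β : Type*} [Fintype α] [Fintype β]
    (f : OrthonormalBasis α ℝ V) (g : OrthonormalBasis β ℝ V)
    {T : V →ₗ[ℝ] V} (hT : T.IsSymmetric) :
    ∑ i, ⟪f i, T (f i)⟫ = ∑ k, ⟪g k, T (g k)⟫ := by
  have h1 : ∀ i, ⟪f i, T (f i)⟫ = ∑ k, ⟪f i, g k⟫ * ⟪g k, T (f i)⟫ := fun i =>
    (g.sum_inner_mul_inner _ _).symm
  simp_rw [h1]
  rw [Finset.sum_comm]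
  apply Finset.sum_congr rfl
  intro k _
  have h2 : ∀ i, ⟪f i, g k⟫ * ⟪g k, T (f i)⟫ = ⟪T (g k), f i⟫ * ⟪f i, g k⟫ := by
    intro i
    rw [hT (g k) (f i)]
    ring
  simp_rw [h2]
  rw [f.sum_inner_mul_inner]
  exact real_inner_comm _ _

-- Parseval-type: sum over ON basis of squares of inner products with the projection
lemma sum_sq_inner_onb {𝓧 : Type*} [NormedAddCommGroup 𝓧] [InnerProductSpace ℝ 𝓧]
    {V : Submodule ℝ 𝓧} [CompleteSpace V] {α : Type*} [Fintype α]
    (f : OrthonormalBasis α ℝ V) (x : 𝓧) :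
    ∑ i, ⟪(f i : 𝓧), x⟫ ^ 2 = ‖(Submodule.orthogonalProjection V x : V)‖ ^ 2 := by
  have h1 : ∀ i, ⟪(f i : 𝓧), x⟫ = ⟪f i, Submodule.orthogonalProjection V x⟫ := fun i =>
    (Submodule.inner_orthogonalProjection_eq_of_mem_left (K := V) (f i) x).symm
  simp_rw [h1]
  have h2 := f.sum_inner_mul_inner (Submodule.orthogonalProjection V x) (Submodule.orthogonalProjection V x)
  rw [real_inner_self_eq_norm_sq] at h2
  rw [← h2]
  apply Finset.sum_congr rfl
  intro i _
  rw [real_inner_comm (f i)]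
  ring

lemma finset_tail {𝓧 : Type*} [NormedAddCommGroup 𝓧] [InnerProductSpace ℝ 𝓧] [CompleteSpace 𝓧]
    [MeasurableSpace 𝓧] [BorelSpace 𝓧]
    {Ω : Type*} [MeasurableSpace Ω] {μ : Measure Ω} [IsProbabilityMeasure μ]
    (X : Ω → 𝓧) (hmeas : AEMeasurable X μ)
    (R : 𝓧 →L[ℝ] 𝓧) (hR : R.IsPositive) (hB : 0 < ‖R‖)
    {ι : Type*} (b : HilbertBasis ι ℝ 𝓧) {trR : ℝ}
    (htr : HasSum (fun i => ⟪b i, R (b i)⟫) trR)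
    (hint : ∀ u : 𝓧, Integrable (fun ω => Real.exp ⟪u, X ω⟫) μ)
    (hsub : ∀ u : 𝓧, Real.log (∫ ω, Real.exp ⟪u, X ω⟫ ∂μ) ≤ ⟪u, R u⟫ / 2)
    {ε : ℝ} (hε : 0 < ε) (hεt : trR ≤ ε^2/4) (s : Finset ι) :
    μ {ω | ε^2 < ∑ i ∈ s, ⟪b i, X ω⟫^2} ≤ ENNReal.ofReal (exp (-(ε^2)/(8*‖R‖))) := by
  classical
  -- self-adjointness of R as an inner product identity
  have hRsa : ∀ x y : 𝓧, ⟪R x, y⟫ = ⟪x, R y⟫ := by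
    intro x y
    have hA : ContinuousLinearMap.adjoint R = R := ContinuousLinearMap.isSelfAdjoint_iff'.mp hR.isSelfAdjoint
    conv_lhs => rw [← hA]
    exact ContinuousLinearMap.adjoint_inner_left R y x
  set V : Submodule ℝ 𝓧 := Submodule.span ℝ ((s.image b : Finset 𝓧) : Set 𝓧) with hVdef
  haveI : FiniteDimensional ℝ V := FiniteDimensional.span_finset ℝ _
  set n : ℕ := Module.finrank ℝ V with hndef
  set T : V →ₗ[ℝ] V :=
    ((Submodule.orthogonalProjection V).comp (R.comp V.subtypeL)).toLinearMap with hTdef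
  have fact1 : ∀ v x : V, ⟪T v, x⟫ = ⟪R (v:𝓧), (x:𝓧)⟫ := by
    intro v x
    show ⟪(Submodule.orthogonalProjection V (R (v:𝓧)) : V), x⟫ = _
    exact Submodule.inner_orthogonalProjection_eq_of_mem_right (K := V) x (R (v:𝓧))
  have hTsym : T.IsSymmetric := by
    intro v x
    rw [fact1 v x, hRsa]
    rw [show ⟪v, T x⟫ = ⟪T x, v⟫ from real_inner_comm _ _, fact1 x v]
    exact real_inner_comm _ _
  set e := hTsym.eigenvectorBasis rfl with hedef
  set μs := hTsym.eigenvalues rfl with hmudef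
  set Y : Fin n → Ω → ℝ := fun k ω => ⟪(e k : 𝓧), X ω⟫ with hYdef
  have hite : ∀ k j : Fin n, ⟪(e k : 𝓧), R (e j : 𝓧)⟫ = if k = j then μs j else 0 := by
    intro k j
    have h1 : ⟪R ((e j : V) : 𝓧), ((e k : V) : 𝓧)⟫ = ⟪T (e j), e k⟫ := (fact1 (e j) (e k)).symm
    have h2 : T (e j) = μs j • e j := by
      rw [hedef, hmudef]
      exact_mod_cast hTsym.apply_eigenvectorBasis rfl j
    rw [real_inner_comm, h1, h2, real_inner_smul_left]
    rw [orthonormal_iff_ite.mp e.orthonormal j k]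
    by_cases hkj : k = j <;> simp [hkj]
    intro h; exact absurd h.symm hkj
  have hnorm_e : ∀ k, ‖(e k : 𝓧)‖ = 1 := by
    intro k
    have := e.orthonormal.1 k
    rwa [show ‖e k‖ = ‖(e k : 𝓧)‖ from rfl] at this
  -- hypotheses of core_tail
  have hY : ∀ k, AEMeasurable (Y k) μ := by
    intro k
    exact ((continuous_const.inner continuous_id).measurable).comp_aemeasurable hmeas
  have hμ0 : ∀ k, 0 ≤ μs k := by
    intro k
    have := hite k k
    rw [if_pos rfl] at this
    rw [← this, real_inner_comm]
    have h := hR.inner_nonneg_left ((e k : V) : 𝓧)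
    simpa using h
  have hμB : ∀ k, μs k ≤ ‖R‖ := by
    intro k
    have h1 := hite k k
    rw [if_pos rfl] at h1
    rw [← h1]
    calc ⟪(e k : 𝓧), R (e k : 𝓧)⟫ ≤ ‖(e k : 𝓧)‖ * ‖R (e k : 𝓧)‖ := real_inner_le_norm _ _
      _ ≤ 1 * ‖R‖ := by
          rw [hnorm_e k, one_mul, one_mul]
          have h := R.le_opNorm ((e k : V) : 𝓧)
          rwa [hnorm_e k, mul_one] at h
      _ = ‖R‖ := one_mul _
  have hμt : ∑ k, μs k ≤ trR := by
    have hdiag : ∀ k, μs k = ⟪e k, T (e k)⟫ := by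
      intro k
      have h2 := hite k k
      rw [if_pos rfl] at h2
      calc μs k = ⟪(e k : 𝓧), R (e k : 𝓧)⟫ := h2.symm
        _ = ⟪R (e k : 𝓧), (e k : 𝓧)⟫ := real_inner_comm _ _
        _ = ⟪T (e k), e k⟫ := (fact1 _ _).symm
        _ = ⟪e k, T (e k)⟫ := real_inner_comm _ _
    simp_rw [hdiag]
    set f := OrthonormalBasis.span b.orthonormal s with hfdef
    rw [trace_onb_indep e f hTsym]
    have hstep : ∀ i : s, ⟪f i, T (f i)⟫ = ⟪b i, R (b i)⟫ := by
      intro i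
      calc ⟪f i, T (f i)⟫ = ⟪T (f i), f i⟫ := real_inner_comm _ _
        _ = ⟪R ((f i : V) : 𝓧), ((f i : V) : 𝓧)⟫ := fact1 _ _
        _ = ⟪((f i : V) : 𝓧), R ((f i : V) : 𝓧)⟫ := real_inner_comm _ _
        _ = ⟪b i, R (b i)⟫ := by rw [OrthonormalBasis.span_apply]
    simp_rw [hstep]
    rw [Finset.sum_coe_sort s (fun i => ⟪b i, R (b i)⟫)]
    exact sum_le_hasSum s (fun i _ => by
      have h := hR.inner_nonneg_left (b i)
      rw [real_inner_comm]
      exact h) htr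
  have hintg : ∀ l : Fin n → ℝ, Integrable (fun ω => exp (∑ k, l k * Y k ω)) μ := by
    intro l
    have h1 : ∀ ω, (∑ k, l k * Y k ω) = ⟪∑ k, l k • (e k : 𝓧), X ω⟫ := by
      intro ω
      rw [sum_inner]
      apply Finset.sum_congr rfl
      intro k _
      rw [real_inner_smul_left]
    simp_rw [h1]
    exact hint _
  have hmgf : ∀ l : Fin n → ℝ,
      ∫ ω, exp (∑ k, l k * Y k ω) ∂μ ≤ exp (∑ k, μs k * l k ^ 2 / 2) := by
    intro l
    set u : 𝓧 := ∑ k, l k • (e k : 𝓧) with hudef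
    have h1 : ∀ ω, (∑ k, l k * Y k ω) = ⟪u, X ω⟫ := by
      intro ω
      rw [hudef, sum_inner]
      apply Finset.sum_congr rfl
      intro k _
      rw [real_inner_smul_left]
    have hquad : ⟪u, R u⟫ = ∑ k, μs k * l k ^ 2 := by
      rw [hudef, sum_inner]
      rw [show R (∑ k, l k • (e k : 𝓧)) = ∑ j, l j • R (e j : 𝓧) by
        rw [map_sum]; exact Finset.sum_congr rfl fun j _ => R.map_smul _ _]
      have : ∀ k, ⟪l k • (e k : 𝓧), ∑ j, l j • R (e j : 𝓧)⟫
          = ∑ j, l k * (l j * ⟪(e k : 𝓧), R (e j : 𝓧)⟫) := by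
        intro k
        rw [inner_sum]
        apply Finset.sum_congr rfl
        intro j _
        rw [real_inner_smul_left, real_inner_smul_right]
      simp_rw [this, hite, mul_ite, mul_zero]
      apply Finset.sum_congr rfl
      intro k _
      rw [Finset.sum_ite_eq (Finset.univ : Finset (Fin n)) k
        (fun j => l k * (l j * μs j))]
      simp only [Finset.mem_univ, if_true]
      ring
    have hpos : 0 < ∫ ω, exp (⟪u, X ω⟫) ∂μ :=
      integral_exp_pos (hint u)
    have hlog := hsub u
    rw [Real.log_le_iff_le_exp hpos] at hlog
    simp_rw [h1]
    calc ∫ ω, exp (⟪u, X ω⟫) ∂μ ≤ exp (⟪u, R u⟫ / 2) := hlog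
      _ = exp (∑ k, μs k * l k ^ 2 / 2) := by
          rw [hquad, Finset.sum_div]
  -- event inclusion
  have hevent : {ω | ε^2 < ∑ i ∈ s, ⟪b i, X ω⟫^2} ⊆ {ω | ε^2 < ∑ k, Y k ω ^ 2} := by
    intro ω hω
    simp only [Set.mem_setOf_eq] at hω ⊢
    have hfx : ∑ i ∈ s, ⟪b i, X ω⟫^2 = ‖(Submodule.orthogonalProjection V (X ω) : V)‖^2 := by
      rw [← sum_sq_inner_onb (OrthonormalBasis.span b.orthonormal s) (X ω)]
      rw [← Finset.sum_coe_sort s (fun i => ⟪b i, X ω⟫^2)]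
      apply Finset.sum_congr rfl
      intro i _
      rw [OrthonormalBasis.span_apply]
    have hex : ∑ k, Y k ω ^ 2 = ‖(Submodule.orthogonalProjection V (X ω) : V)‖^2 :=
      sum_sq_inner_onb e (X ω)
    rw [hex, ← hfx]
    exact hω
  calc μ {ω | ε^2 < ∑ i ∈ s, ⟪b i, X ω⟫^2} ≤ μ {ω | ε^2 < ∑ k, Y k ω ^ 2} :=
        measure_mono hevent
    _ ≤ ENNReal.ofReal (exp (-(ε^2)/(8*‖R‖))) :=
        core_tail Y hY μs hB hμ0 hμB hμt hintg hmgf hε hεt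

end Helpers

/-- Hoeffding-type outer tail bound for an `R`-subgaussian vector in a real separable
Hilbert space: for all `ε > 2√(tr R)`, `P[‖X ω‖ > ε] ≤ exp(-ε²/(8‖R‖))`. -/

theorem rSubgaussian_norm_tail_bound
    {𝓧 : Type*} [NormedAddCommGroup 𝓧] [InnerProductSpace ℝ 𝓧] [CompleteSpace 𝓧]
    [TopologicalSpace.SeparableSpace 𝓧] [MeasurableSpace 𝓧] [BorelSpace 𝓧]
    {Ω : Type*} [MeasurableSpace Ω] {μ : Measure Ω} [IsProbabilityMeasure μ]
    (X : Ω → 𝓧) (hmeas : AEMeasurable X μ)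
    (R : 𝓧 →L[ℝ] 𝓧) (hR : R.IsPositive)
    {ι : Type*} [Countable ι] (b : HilbertBasis ι ℝ 𝓧)
    (trR : ℝ) (htr : HasSum (fun i => ⟪b i, R (b i)⟫) trR)
    (hint : ∀ u : 𝓧, Integrable (fun ω => Real.exp ⟪u, X ω⟫) μ)
    (hsub : ∀ u : 𝓧, Real.log (∫ ω, Real.exp ⟪u, X ω⟫ ∂μ) ≤ ⟪u, R u⟫ / 2)
    (ε : ℝ) (hε : 2 * Real.sqrt trR < ε) :
    μ {ω | ε < ‖X ω‖} ≤ ENNReal.ofReal (Real.exp (-(ε ^ 2) / (8 * ‖R‖))) := by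
  rcases eq_or_lt_of_le (norm_nonneg R) with hB | hB
  · -- degenerate case ‖R‖ = 0 : the right-hand side is 1
    have h8 : (8:ℝ) * ‖R‖ = 0 := by rw [← hB]; ring
    rw [h8, div_zero, Real.exp_zero, ENNReal.ofReal_one]
    exact prob_le_one
  · have htr0 : 0 ≤ trR := htr.nonneg fun i => by
      have h := hR.inner_nonneg_left (b i)
      rw [real_inner_comm]
      exact h
    have hε0 : 0 < ε :=
      lt_of_le_of_lt (by positivity : (0:ℝ) ≤ 2 * Real.sqrt trR) hε
    have hεt : trR ≤ ε^2/4 := by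
      have h1 : Real.sqrt trR < ε/2 := by linarith
      have h2 : trR = (Real.sqrt trR)^2 := (Real.sq_sqrt htr0).symm
      rw [h2]
      have h3 : (Real.sqrt trR)^2 ≤ (ε/2)^2 := by
        nlinarith [Real.sqrt_nonneg trR]
      calc (Real.sqrt trR)^2 ≤ (ε/2)^2 := h3
        _ = ε^2/4 := by ring
    have hmonoA : Monotone (fun s : Finset ι => {ω | ε^2 < ∑ i ∈ s, ⟪b i, X ω⟫^2}) := by
      intro s t hst ω hω
      simp only [Set.mem_setOf_eq] at hω ⊢
      calc ε^2 < ∑ i ∈ s, ⟪b i, X ω⟫^2 := hω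
        _ ≤ ∑ i ∈ t, ⟪b i, X ω⟫^2 :=
          Finset.sum_le_sum_of_subset_of_nonneg hst (fun i _ _ => sq_nonneg _)
    have hsubU : {ω | ε < ‖X ω‖}
        ⊆ ⋃ s : Finset ι, {ω | ε^2 < ∑ i ∈ s, ⟪b i, X ω⟫^2} := by
      intro ω hω
      simp only [Set.mem_setOf_eq] at hω
      have hsum : HasSum (fun i => ⟪b i, X ω⟫^2) (‖X ω‖^2) := by
        have h := b.hasSum_inner_mul_inner (X ω) (X ω)
        rw [real_inner_self_eq_norm_sq] at h
        have heq : (fun i => ⟪X ω, b i⟫ * ⟪b i, X ω⟫) = fun i => ⟪b i, X ω⟫^2 := by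
          funext i
          rw [real_inner_comm (X ω) (b i)]
          ring
        rwa [heq] at h
      have hlt : ε^2 < ‖X ω‖^2 := by nlinarith
      have hev : ∀ᶠ s : Finset ι in Filter.atTop, ε^2 < ∑ i ∈ s, ⟪b i, X ω⟫^2 :=
        hsum.eventually (eventually_gt_nhds hlt)
      obtain ⟨s, hs⟩ := hev.exists
      exact Set.mem_iUnion.mpr ⟨s, hs⟩
    calc μ {ω | ε < ‖X ω‖}
        ≤ μ (⋃ s : Finset ι, {ω | ε^2 < ∑ i ∈ s, ⟪b i, X ω⟫^2}) := measure_mono hsubU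
      _ = ⨆ s : Finset ι, μ {ω | ε^2 < ∑ i ∈ s, ⟪b i, X ω⟫^2} :=
          hmonoA.directed_le.measure_iUnion
      _ ≤ ENNReal.ofReal (Real.exp (-(ε ^ 2) / (8 * ‖R‖))) :=
          iSup_le fun s => finset_tail X hmeas R hR hB b htr hint hsub hε0 hεt s
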